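/- Let S = {S_1, ..., S_m} and S' = {S'_1, ..., S'_m} be self-similar Jordan zippers in ℝ^n with the same signature, whose attractors γ and γ' are arcs of bounded turning. Let p_i, q_i be the similarity ratios of S_i, S'_i, and let α = min over i of min(log p_i / log q_i, log q_i / log p_i). Let f : γ → γ' be the unique homeomorphism with f ∘ S_i = S'_i ∘ f for all i. Then f is Hölder continuous with exponent α: there exists C > 0 such that ‖f(x) − f(y)‖ ≤ C‖x − y‖^α for all x, y ∈ γ. -/

import Mathlib

open Set Metric

/-- `S i`, for `i < m`, is a contracting similarity with ratio `r i ∈ (0,1)`. -/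
def IsSimilaritySystem {X : Type*} [MetricSpace X] (m : ℕ)
    (S : ℕ → X → X) (r : ℕ → ℝ) : Prop :=
  ∀ i < m, 0 < r i ∧ r i < 1 ∧ ∀ x y, dist (S i x) (S i y) = r i * dist x y

/-- Self-similar zipper with maps `S 0, …, S (m-1)`, ratios `r`, vertices `z 0, …, z m`,
signature `ε` (values in `{0,1}`).  Here `S i` plays the role of the map `S_{i+1}` of the
paper, so the zipper conditions read `S i (z 0) = z (i + ε i)` and
`S i (z m) = z (i + 1 - ε i)`. -/
def IsZipper {X : Type*} [MetricSpace X] (m : ℕ)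
    (S : ℕ → X → X) (r : ℕ → ℝ) (z : ℕ → X) (ε : ℕ → ℕ) : Prop :=
  1 ≤ m ∧ IsSimilaritySystem m S r ∧ (∀ i < m, ε i ≤ 1) ∧
    ∀ i < m, S i (z 0) = z (i + ε i) ∧ S i (z m) = z (i + 1 - ε i)

/-- Linear zipper on `[0,1]`, with vertices `0 = t 0 < t 1 < … < t m = 1`. -/
def IsLinearZipper (m : ℕ) (T : ℕ → ℝ → ℝ) (r : ℕ → ℝ) (t : ℕ → ℝ) (ε : ℕ → ℕ) : Prop :=
  IsZipper m T r t ε ∧ t 0 = 0 ∧ t m = 1 ∧ ∀ i < m, t i < t (i + 1)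

/-- `K` is the attractor of the iterated function system `{S i : i < m}`. -/
def IsAttractor {X : Type*} [MetricSpace X] (m : ℕ) (S : ℕ → X → X) (K : Set X) : Prop :=
  K.Nonempty ∧ IsCompact K ∧ K = ⋃ i ∈ Finset.range m, S i '' K

/-- `g` is a structural parametrization of the zipper `S` (with vertices `z`)
relative to the linear zipper `T` (with vertices `t`). -/
def IsStructuralParam {X : Type*} [MetricSpace X] (m : ℕ) (S : ℕ → X → X)
    (T : ℕ → ℝ → ℝ) (t : ℕ → ℝ) (z : ℕ → X) (g : ℝ → X) : Prop :=
  ContinuousOn g (Icc 0 1) ∧ (∀ i ≤ m, g (t i) = z i) ∧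
    ∀ i < m, ∀ x ∈ Icc (0:ℝ) 1, S i (g x) = g (T i x)

/-- A Jordan zipper: a zipper whose attractor `γ` is a Jordan arc, i.e. some structural
parametrization is injective on `[0,1]` (hence a homeomorphism onto `γ`). -/
def IsJordanZipper {X : Type*} [MetricSpace X] (m : ℕ) (S : ℕ → X → X) (r : ℕ → ℝ)
    (z : ℕ → X) (ε : ℕ → ℕ) (γ : Set X) : Prop :=
  IsZipper m S r z ε ∧ IsAttractor m S γ ∧
    ∃ T rT t g, IsLinearZipper m T rT t ε ∧ IsStructuralParam m S T t z g ∧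
      InjOn g (Icc 0 1) ∧ g '' Icc 0 1 = γ

/-- `g` is an injective continuous parametrization of the arc `γ` by `[0,1]`. -/
def IsArcParam {X : Type*} [MetricSpace X] (γ : Set X) (g : ℝ → X) : Prop :=
  ContinuousOn g (Icc 0 1) ∧ InjOn g (Icc 0 1) ∧ g '' Icc 0 1 = γ

/-- Bounded turning with constant `M`: every subarc `γ_{xy}` (expressed via any
parametrization of the arc) has diameter at most `M‖x - y‖`. -/
def BoundedTurning {X : Type*} [MetricSpace X] (γ : Set X) (M : ℝ) : Prop :=
  0 < M ∧ ∀ g : ℝ → X, IsArcParam γ g →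
    ∀ s ∈ Icc (0:ℝ) 1, ∀ u ∈ Icc (0:ℝ) 1, diam (g '' uIcc s u) ≤ M * dist (g s) (g u)

/-- `f` agrees with the systems `S` and `S'` on `γ`: `f ∘ S i = S' i ∘ f` on `γ`. -/
def Agrees {X Y : Type*} [MetricSpace X] [MetricSpace Y] (m : ℕ)
    (S : ℕ → X → X) (S' : ℕ → Y → Y) (γ : Set X) (f : X → Y) : Prop :=
  ∀ i < m, ∀ x ∈ γ, f (S i x) = S' i (f x)

/-- `f` restricts to a homeomorphism of the compact set `γ` onto `γ'`. -/
def IsHomeoOnto {X Y : Type*} [MetricSpace X] [MetricSpace Y]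
    (γ : Set X) (γ' : Set Y) (f : X → Y) : Prop :=
  ContinuousOn f γ ∧ InjOn f γ ∧ f '' γ = γ'

/-- Composition `S_{i₁} ∘ … ∘ S_{i_k}` along a multi-index (a list). -/
def compS {X : Type*} (S : ℕ → X → X) : List ℕ → X → X
  | [] => id
  | i :: l => S i ∘ compS S l

/-- Product of the ratios along a multi-index. -/
def ratioProd (p : ℕ → ℝ) (l : List ℕ) : ℝ := (l.map p).prod


lemma sim_affine {T : ℝ → ℝ} {r : ℝ} (hr : 0 < r)
    (h : ∀ x y, dist (T x) (T y) = r * dist x y) (x : ℝ) :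
    T x = T 0 + (T 1 - T 0) * x := by
  have key : ∀ u v : ℝ, (T u - T v) ^ 2 = r ^ 2 * (u - v) ^ 2 := by
    intro u v
    have huv := h u v
    rw [Real.dist_eq, Real.dist_eq] at huv
    have h2 : (T u - T v) ^ 2 = (r * |u - v|) ^ 2 := by rw [← sq_abs, huv]
    rw [mul_pow, sq_abs] at h2
    exact h2
  have e0 := key x 0
  have e1 := key x 1
  have e2 := key 1 0
  have hc : (T 1 - T 0) ≠ 0 := by
    intro hc0
    rw [hc0] at e2
    simp at e2
    nlinarith
  have hz : (T 1 - T 0) * (T x - T 0 - (T 1 - T 0) * x) = 0 := by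
    linear_combination (e0 - e1) / 2 + (1 / 2 - x) * e2
  rcases mul_eq_zero.1 hz with h' | h'
  · exact absurd h' hc
  · linarith

lemma affine_image_Icc {e c a b : ℝ} (hc : c ≠ 0) (hab : a ≤ b) :
    (fun x => e + c * x) '' Icc a b = uIcc (e + c * a) (e + c * b) := by
  rcases hc.lt_or_gt with hneg | hpos
  · rw [uIcc_of_ge (by nlinarith)]
    ext y
    simp only [mem_image, mem_Icc]
    constructor
    · rintro ⟨x, ⟨hx1, hx2⟩, rfl⟩; constructor <;> nlinarith
    · rintro ⟨h1, h2⟩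
      exact ⟨(y - e) / c, ⟨by rw [le_div_iff_of_neg hneg]; nlinarith,
        by rw [div_le_iff_of_neg hneg]; nlinarith⟩, by field_simp; ring⟩
  · rw [uIcc_of_le (by nlinarith)]
    ext y
    simp only [mem_image, mem_Icc]
    constructor
    · rintro ⟨x, ⟨hx1, hx2⟩, rfl⟩; constructor <;> nlinarith
    · rintro ⟨h1, h2⟩
      exact ⟨(y - e) / c, ⟨by rw [le_div_iff₀ hpos]; nlinarith,
        by rw [div_le_iff₀ hpos]; nlinarith⟩, by field_simp; ring⟩

lemma sim_image_Icc {T : ℝ → ℝ} {r : ℝ} (hr : 0 < r)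
    (h : ∀ x y, dist (T x) (T y) = r * dist x y) {a b : ℝ} (hab : a ≤ b) :
    T '' Icc a b = uIcc (T a) (T b) := by
  have hc : T 1 - T 0 ≠ 0 := by
    have := h 1 0
    rw [Real.dist_eq, Real.dist_eq] at this
    intro h0
    rw [sub_eq_zero] at h0
    rw [h0] at this
    simp at this
    rcases this with h' | h' <;> nlinarith
  have himg : T '' Icc a b = (fun x => T 0 + (T 1 - T 0) * x) '' Icc a b :=
    image_congr fun x _ => sim_affine hr h x
  rw [himg, affine_image_Icc hc hab, ← sim_affine hr h a, ← sim_affine hr h b]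

lemma compS_append {X : Type*} (S : ℕ → X → X) (w₁ w₂ : List ℕ) :
    compS S (w₁ ++ w₂) = compS S w₁ ∘ compS S w₂ := by
  induction w₁ with
  | nil => rfl
  | cons i w ih =>
    show S i ∘ compS S (w ++ w₂) = (S i ∘ compS S w) ∘ compS S w₂
    rw [ih]
    rfl

@[simp] lemma ratioProd_nil (p : ℕ → ℝ) : ratioProd p [] = 1 := rfl

lemma ratioProd_cons (p : ℕ → ℝ) (i : ℕ) (w : List ℕ) :
    ratioProd p (i :: w) = p i * ratioProd p w := by simp [ratioProd]

lemma ratioProd_append (p : ℕ → ℝ) (w₁ w₂ : List ℕ) :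
    ratioProd p (w₁ ++ w₂) = ratioProd p w₁ * ratioProd p w₂ := by simp [ratioProd]

lemma ratioProd_pos {p : ℕ → ℝ} {w : List ℕ} (h : ∀ i ∈ w, 0 < p i) :
    0 < ratioProd p w := by
  induction w with
  | nil => simp
  | cons i w ih =>
    rw [ratioProd_cons]
    exact mul_pos (h i (by simp)) (ih fun j hj => h j (by simp [hj]))

lemma compS_sim {X : Type*} [MetricSpace X] {S : ℕ → X → X} {p : ℕ → ℝ} {w : List ℕ}
    (h : ∀ i ∈ w, ∀ x y, dist (S i x) (S i y) = p i * dist x y) (x y : X) :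
    dist (compS S w x) (compS S w y) = ratioProd p w * dist x y := by
  induction w with
  | nil => simp [compS]
  | cons i w ih =>
    simp only [compS, Function.comp_apply, ratioProd_cons]
    rw [h i (by simp), ih fun j hj => h j (by simp [hj]), mul_assoc]

lemma diam_sim_image {X : Type*} [MetricSpace X] {S : X → X} {r : ℝ} (hr : 0 < r)
    (h : ∀ x y, dist (S x) (S y) = r * dist x y) {A : Set X}
    (hA : Bornology.IsBounded A) : diam (S '' A) = r * diam A := by
  have hb : Bornology.IsBounded (S '' A) := by
    rw [isBounded_iff]
    exact ⟨r * diam A, by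
      rintro _ ⟨x, hx, rfl⟩ _ ⟨y, hy, rfl⟩
      rw [h]
      exact mul_le_mul_of_nonneg_left (dist_le_diam_of_mem hA hx hy) hr.le⟩
  apply le_antisymm
  · apply diam_le_of_forall_dist_le (by positivity)
    rintro _ ⟨x, hx, rfl⟩ _ ⟨y, hy, rfl⟩
    rw [h]
    exact mul_le_mul_of_nonneg_left (dist_le_diam_of_mem hA hx hy) hr.le
  · rw [mul_comm, ← le_div_iff₀ hr]
    apply diam_le_of_forall_dist_le (by positivity)
    intro x hx y hy
    rw [le_div_iff₀ hr, mul_comm, ← h]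
    exact dist_le_diam_of_mem hb (mem_image_of_mem S hx) (mem_image_of_mem S hy)

open scoped Classical in
noncomputable def chainA (m : ℕ) (T : ℕ → ℝ → ℝ) (a : ℝ) : ℕ → List ℕ
  | 0 => []
  | k+1 => chainA m T a k ++ [if compS T (chainA m T a k) 0 = a then 0 else m - 1]

lemma chainA_length (m : ℕ) (T : ℕ → ℝ → ℝ) (a : ℝ) (k : ℕ) :
    (chainA m T a k).length = k := by
  induction k with
  | zero => rfl
  | succ k ih => simp [chainA, ih]

lemma sim_image_isBounded {X : Type*} [MetricSpace X] {S : X → X} {r : ℝ} (hr : 0 < r)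
    (h : ∀ x y, dist (S x) (S y) = r * dist x y) {A : Set X}
    (hA : Bornology.IsBounded A) : Bornology.IsBounded (S '' A) := by
  rw [isBounded_iff]
  exact ⟨r * diam A, by
    rintro _ ⟨x, hx, rfl⟩ _ ⟨y, hy, rfl⟩
    rw [h]
    exact mul_le_mul_of_nonneg_left (dist_le_diam_of_mem hA hx hy) hr.le⟩

set_option maxHeartbeats 1000000 in
/-- the agreeing homeomorphism between attractors of bounded turning is
Hölder continuous with exponent `α = min_i min(log p_i / log q_i, log q_i / log p_i)`. -/
theorem agreeing_homeo_holder {n : ℕ} (m : ℕ)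
    (S S' : ℕ → EuclideanSpace ℝ (Fin n) → EuclideanSpace ℝ (Fin n)) (p q : ℕ → ℝ)
    (z z' : ℕ → EuclideanSpace ℝ (Fin n)) (ε : ℕ → ℕ)
    (γ γ' : Set (EuclideanSpace ℝ (Fin n)))
    (hS : IsJordanZipper m S p z ε γ) (hS' : IsJordanZipper m S' q z' ε γ')
    (M M' : ℝ) (hγ : BoundedTurning γ M) (hγ' : BoundedTurning γ' M')
    (f : EuclideanSpace ℝ (Fin n) → EuclideanSpace ℝ (Fin n))
    (hf : IsHomeoOnto γ γ' f) (hfa : Agrees m S S' γ f)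
    (hm : 0 < m) (α : ℝ)
    (hα : α = (Finset.range m).inf' (Finset.nonempty_range_iff.mpr hm.ne')
      (fun i => min (Real.log (p i) / Real.log (q i)) (Real.log (q i) / Real.log (p i)))) :
    ∃ C > (0:ℝ), ∀ x ∈ γ, ∀ y ∈ γ, dist (f x) (f y) ≤ C * dist x y ^ α := by
  classical
  obtain ⟨hzip, hattr, T, rT, t, g, hlin, hstruct, hinj, himg⟩ := hS
  obtain ⟨hzip', hattr', -⟩ := hS'
  obtain ⟨hm1, hsim, hε, hver⟩ := hzip
  obtain ⟨-, hsim', -, -⟩ := hzip'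
  obtain ⟨⟨-, hsimT, hεT, hverT⟩, ht0, htm, htmono⟩ := hlin
  obtain ⟨hgc, hgver, hgstruct⟩ := hstruct
  obtain ⟨hγne, hγcomp, hγeq⟩ := hattr
  obtain ⟨hγ'ne, hγ'comp, hγ'eq⟩ := hattr'
  obtain ⟨hfc, hfinj, hfim⟩ := hf
  obtain ⟨hM, hBT⟩ := hγ
  have hγb : Bornology.IsBounded γ := hγcomp.isBounded
  have hγ'b : Bornology.IsBounded γ' := hγ'comp.isBounded
  set D := diam γ with hD_def
  set D' := diam γ' with hD'_def
  have hmem01 : (0:ℝ) ∈ Icc (0:ℝ) 1 := by norm_num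
  have hmem11 : (1:ℝ) ∈ Icc (0:ℝ) 1 := by norm_num
  have gmem : ∀ x ∈ Icc (0:ℝ) 1, g x ∈ γ := fun x hx => himg ▸ mem_image_of_mem g hx
  have hD : 0 < D := by
    have h01 : g 0 ≠ g 1 := fun h => by
      have := hinj hmem01 hmem11 h; norm_num at this
    have := dist_le_diam_of_mem hγb (gmem 0 hmem01) (gmem 1 hmem11)
    have hgt : 0 < dist (g 0) (g 1) := dist_pos.mpr h01
    linarith
  have hD' : 0 ≤ D' := diam_nonneg
  -- monotonicity of t
  have ht_le : ∀ j, j ≤ m → ∀ i, i ≤ j → t i ≤ t j := by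
    intro j
    induction j with
    | zero => intro _ i hi; simp [Nat.le_zero.mp hi]
    | succ k ihk =>
      intro hk i hi
      rcases eq_or_lt_of_le hi with rfl | h'
      · rfl
      · exact le_trans (ihk (le_trans (Nat.le_succ k) hk) i (Nat.lt_succ_iff.mp h'))
          (le_of_lt (htmono k (Nat.lt_of_succ_le hk)))
  have hti : ∀ i, i ≤ m → t i ∈ Icc (0:ℝ) 1 := by
    intro i hi
    constructor
    · have := ht_le i hi 0 (Nat.zero_le i); linarith [this, ht0.symm ▸ this]
    · have := ht_le m le_rfl i hi; linarith [htm ▸ this]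
  -- image of [0,1] under T i
  have TImage : ∀ i, i < m → T i '' Icc 0 1 = Icc (t i) (t (i+1)) := by
    intro i hi
    obtain ⟨hrT0, hrT1, hrTd⟩ := hsimT i hi
    have h := sim_image_Icc hrT0 hrTd (by norm_num : (0:ℝ) ≤ 1)
    have e0 : T i 0 = t (i + ε i) := by rw [← ht0]; exact (hverT i hi).1
    have e1 : T i 1 = t (i + 1 - ε i) := by rw [← htm]; exact (hverT i hi).2
    rcases Nat.le_one_iff_eq_zero_or_eq_one.mp (hε i hi) with he | he
    · rw [h, e0, e1, he]
      simp only [Nat.add_zero, Nat.sub_zero]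
      exact uIcc_of_le (le_of_lt (htmono i hi))
    · rw [h, e0, e1, he]
      simp only [Nat.add_sub_cancel]
      exact uIcc_of_ge (le_of_lt (htmono i hi))
  have Tmaps : ∀ i, i < m → ∀ x ∈ Icc (0:ℝ) 1, T i x ∈ Icc (0:ℝ) 1 := by
    intro i hi x hx
    have : T i x ∈ T i '' Icc 0 1 := mem_image_of_mem _ hx
    rw [TImage i hi] at this
    exact ⟨le_trans (hti i (le_of_lt hi)).1 this.1,
      le_trans this.2 (hti (i+1) hi).2⟩
  have TwMaps : ∀ w : List ℕ, (∀ i ∈ w, i < m) → ∀ x ∈ Icc (0:ℝ) 1,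
      compS T w x ∈ Icc (0:ℝ) 1 := by
    intro w
    induction w with
    | nil => intro _ x hx; exact hx
    | cons i w ih =>
      intro hw x hx
      exact Tmaps i (hw i (by simp)) _ (ih (fun j hj => hw j (by simp [hj])) x hx)
  have gTw : ∀ w : List ℕ, (∀ i ∈ w, i < m) → ∀ x ∈ Icc (0:ℝ) 1,
      g (compS T w x) = compS S w (g x) := by
    intro w
    induction w with
    | nil => intro _ x _; rfl
    | cons i w ih =>
      intro hw x hx
      have hmem : compS T w x ∈ Icc (0:ℝ) 1 := TwMaps w (fun j hj => hw j (by simp [hj])) x hx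
      show g (T i (compS T w x)) = S i (compS S w (g x))
      rw [← (hgstruct i (hw i (by simp)) _ hmem), ih (fun j hj => hw j (by simp [hj])) x hx]
  -- similarity of compositions
  have Twsim : ∀ w : List ℕ, (∀ i ∈ w, i < m) → ∀ x y,
      dist (compS T w x) (compS T w y) = ratioProd rT w * dist x y :=
    fun w hw => compS_sim (fun i hi => (hsimT i (hw i hi)).2.2)
  have Swsim : ∀ w : List ℕ, (∀ i ∈ w, i < m) → ∀ x y,
      dist (compS S w x) (compS S w y) = ratioProd p w * dist x y :=
    fun w hw => compS_sim (fun i hi => (hsim i (hw i hi)).2.2)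
  have S'wsim : ∀ w : List ℕ, (∀ i ∈ w, i < m) → ∀ x y,
      dist (compS S' w x) (compS S' w y) = ratioProd q w * dist x y :=
    fun w hw => compS_sim (fun i hi => (hsim' i (hw i hi)).2.2)
  have pwpos : ∀ w : List ℕ, (∀ i ∈ w, i < m) → 0 < ratioProd p w :=
    fun w hw => ratioProd_pos (fun i hi => (hsim i (hw i hi)).1)
  have qwpos : ∀ w : List ℕ, (∀ i ∈ w, i < m) → 0 < ratioProd q w :=
    fun w hw => ratioProd_pos (fun i hi => (hsim' i (hw i hi)).1)
  have rTwpos : ∀ w : List ℕ, (∀ i ∈ w, i < m) → 0 < ratioProd rT w :=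
    fun w hw => ratioProd_pos (fun i hi => (hsimT i (hw i hi)).1)
  -- pieces
  have Sγsub : ∀ i, i < m → S i '' γ ⊆ γ := by
    intro i hi
    conv_rhs => rw [hγeq]
    intro x hx
    exact mem_iUnion₂.mpr ⟨i, Finset.mem_range.mpr hi, hx⟩
  have S'γ'sub : ∀ i, i < m → S' i '' γ' ⊆ γ' := by
    intro i hi
    conv_rhs => rw [hγ'eq]
    intro x hx
    exact mem_iUnion₂.mpr ⟨i, Finset.mem_range.mpr hi, hx⟩
  have Swγsub : ∀ w : List ℕ, (∀ i ∈ w, i < m) → compS S w '' γ ⊆ γ := by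
    intro w
    induction w with
    | nil => intro _; simp [compS]
    | cons i w ih =>
      intro hw
      show (S i ∘ compS S w) '' γ ⊆ γ
      rw [image_comp]
      exact le_trans (image_mono (ih fun j hj => hw j (by simp [hj])))
        (Sγsub i (hw i (by simp)))
  have fSw : ∀ w : List ℕ, (∀ i ∈ w, i < m) → f '' (compS S w '' γ) = compS S' w '' γ' := by
    intro w
    induction w with
    | nil => simpa [compS] using hfim
    | cons i w ih =>
      intro hw
      have hiw : i < m := hw i (by simp)
      have hsub : compS S w '' γ ⊆ γ := Swγsub w (fun j hj => hw j (by simp [hj]))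
      have step1 : compS S (i :: w) '' γ = S i '' (compS S w '' γ) :=
        image_comp (S i) (compS S w) γ
      have step2 : compS S' (i :: w) '' γ' = S' i '' (compS S' w '' γ') :=
        image_comp (S' i) (compS S' w) γ'
      rw [step1, step2, ← ih (fun j hj => hw j (by simp [hj]))]
      rw [← image_comp f (S i), ← image_comp (S' i) f]
      exact image_congr fun x hx => hfa i hiw x (hsub hx)
  have gIm : ∀ w : List ℕ, (∀ i ∈ w, i < m) →
      g '' (compS T w '' Icc 0 1) = compS S w '' γ := by
    intro w hw
    rw [← image_comp, ← himg, ← image_comp]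
    exact image_congr fun x hx => gTw w hw x hx
  have diamSw : ∀ w : List ℕ, (∀ i ∈ w, i < m) →
      diam (compS S w '' γ) = ratioProd p w * D :=
    fun w hw => diam_sim_image (pwpos w hw) (Swsim w hw) hγb
  have diamS'w : ∀ w : List ℕ, (∀ i ∈ w, i < m) →
      diam (compS S' w '' γ') = ratioProd q w * D' :=
    fun w hw => diam_sim_image (qwpos w hw) (S'wsim w hw) hγ'b
  have S'wbdd : ∀ w : List ℕ, (∀ i ∈ w, i < m) → Bornology.IsBounded (compS S' w '' γ') :=
    fun w hw => sim_image_isBounded (qwpos w hw) (S'wsim w hw) hγ'b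
  -- exponent facts
  have hlogp : ∀ i, i < m → Real.log (p i) < 0 :=
    fun i hi => Real.log_neg (hsim i hi).1 (hsim i hi).2.1
  have hlogq : ∀ i, i < m → Real.log (q i) < 0 :=
    fun i hi => Real.log_neg (hsim' i hi).1 (hsim' i hi).2.1
  have hα0 : 0 < α := by
    rw [hα]
    rw [Finset.lt_inf'_iff]
    intro i hi
    rw [Finset.mem_range] at hi
    exact lt_min (div_pos_iff.mpr (Or.inr ⟨hlogp i hi, hlogq i hi⟩))
      (div_pos_iff.mpr (Or.inr ⟨hlogq i hi, hlogp i hi⟩))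
  have hα1 : α ≤ 1 := by
    have h0 : (0:ℕ) ∈ Finset.range m := Finset.mem_range.mpr hm
    have hle := hα ▸ Finset.inf'_le
      (fun i => min (Real.log (p i) / Real.log (q i)) (Real.log (q i) / Real.log (p i))) h0
    have hA := hlogp 0 hm
    have hB := hlogq 0 hm
    rcases le_total (Real.log (p 0) / Real.log (q 0)) (Real.log (q 0) / Real.log (p 0)) with h | h
    · have : Real.log (p 0) / Real.log (q 0) ≤ 1 ∨ Real.log (q 0) / Real.log (p 0) ≤ 1 := by
        by_contra hcon
        push_neg at hcon
        obtain ⟨h1, h2⟩ := hcon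
        rw [lt_div_iff_of_neg hB] at h1
        rw [lt_div_iff_of_neg hA] at h2
        linarith
      rcases this with h' | h'
      · exact le_trans hle (le_trans (min_le_left _ _) h')
      · exact le_trans hle (le_trans (min_le_right _ _) h')
    · have : Real.log (p 0) / Real.log (q 0) ≤ 1 ∨ Real.log (q 0) / Real.log (p 0) ≤ 1 := by
        by_contra hcon
        push_neg at hcon
        obtain ⟨h1, h2⟩ := hcon
        rw [lt_div_iff_of_neg hB] at h1
        rw [lt_div_iff_of_neg hA] at h2
        linarith
      rcases this with h' | h'
      · exact le_trans hle (le_trans (min_le_left _ _) h')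
      · exact le_trans hle (le_trans (min_le_right _ _) h')
  have qle : ∀ i, i < m → q i ≤ p i ^ α := by
    intro i hi
    have hle : α ≤ Real.log (q i) / Real.log (p i) := by
      have hmem : i ∈ Finset.range m := Finset.mem_range.mpr hi
      exact le_trans (hα ▸ Finset.inf'_le _ hmem) (min_le_right _ _)
    have h1 : Real.log (q i) ≤ α * Real.log (p i) := by
      rw [le_div_iff_of_neg (hlogp i hi)] at hle
      linarith [hle]
    calc q i = Real.exp (Real.log (q i)) := (Real.exp_log (hsim' i hi).1).symm
      _ ≤ Real.exp (α * Real.log (p i)) := Real.exp_le_exp.mpr h1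
      _ = p i ^ α := by rw [Real.rpow_def_of_pos (hsim i hi).1, mul_comm]
  have qwle : ∀ w : List ℕ, (∀ i ∈ w, i < m) → ratioProd q w ≤ ratioProd p w ^ α := by
    intro w
    induction w with
    | nil => simp
    | cons i w ih =>
      intro hw
      rw [ratioProd_cons, ratioProd_cons,
        Real.mul_rpow (hsim i (hw i (by simp))).1.le (pwpos w (fun j hj => hw j (by simp [hj]))).le]
      exact mul_le_mul (qle i (hw i (by simp))) (ih fun j hj => hw j (by simp [hj]))
        (qwpos w (fun j hj => hw j (by simp [hj]))).le
        (Real.rpow_nonneg (hsim i (hw i (by simp))).1.le α)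
  -- constants
  have hrange : (Finset.range m).Nonempty := Finset.nonempty_range_iff.mpr hm.ne'
  set pmin := (Finset.range m).inf' hrange p with hpmin_def
  have hpmin0 : 0 < pmin := by
    rw [hpmin_def, Finset.lt_inf'_iff]
    intro i hi
    exact (hsim i (Finset.mem_range.mp hi)).1
  have hpminle : ∀ i, i < m → pmin ≤ p i :=
    fun i hi => Finset.inf'_le p (Finset.mem_range.mpr hi)
  set rmax := (Finset.range m).sup' hrange rT with hrmax_def
  have hrmax0 : 0 < rmax := by
    have := Finset.le_sup' rT (Finset.mem_range.mpr hm)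
    exact lt_of_lt_of_le (hsimT 0 hm).1 this
  have hrmax1 : rmax < 1 := by
    rw [hrmax_def, Finset.sup'_lt_iff]
    intro i hi
    exact (hsimT i (Finset.mem_range.mp hi)).2.1
  have hrmaxle : ∀ i, i < m → rT i ≤ rmax :=
    fun i hi => Finset.le_sup' rT (Finset.mem_range.mpr hi)
  have rTwle : ∀ w : List ℕ, (∀ i ∈ w, i < m) → ratioProd rT w ≤ rmax ^ w.length := by
    intro w
    induction w with
    | nil => simp
    | cons i w ih =>
      intro hw
      rw [ratioProd_cons, List.length_cons, pow_succ, mul_comm (rmax ^ w.length) rmax]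
      exact mul_le_mul (hrmaxle i (hw i (by simp))) (ih fun j hj => hw j (by simp [hj]))
        (rTwpos w (fun j hj => hw j (by simp [hj]))).le hrmax0.le
  -- transfer lemma
  have transfer : ∀ i, i < m → ∀ K : ℝ, 0 ≤ K → ∀ x ∈ Icc (0:ℝ) 1, ∀ y ∈ Icc (0:ℝ) 1,
      dist (f (g x)) (f (g y)) ≤ K * dist (g x) (g y) ^ α →
      dist (f (g (T i x))) (f (g (T i y))) ≤ K * dist (g (T i x)) (g (T i y)) ^ α := by
    intro i hi K hK x hx y hy hbound
    have e1 : g (T i x) = S i (g x) := (hgstruct i hi x hx).symm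
    have e2 : g (T i y) = S i (g y) := (hgstruct i hi y hy).symm
    rw [e1, e2, hfa i hi (g x) (gmem x hx), hfa i hi (g y) (gmem y hy)]
    rw [(hsim' i hi).2.2, (hsim i hi).2.2]
    rw [Real.mul_rpow (hsim i hi).1.le dist_nonneg]
    have h1 : 0 ≤ dist (g x) (g y) ^ α := Real.rpow_nonneg dist_nonneg α
    have h2 : q i ≤ p i ^ α := qle i hi
    have h3 : 0 < q i := (hsim' i hi).1
    nlinarith [mul_le_mul_of_nonneg_left hbound h3.le,
      mul_le_mul_of_nonneg_right h2 (mul_nonneg hK h1)]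
  -- bounded turning applied to g
  have hBTg : ∀ s ∈ Icc (0:ℝ) 1, ∀ u ∈ Icc (0:ℝ) 1,
      diam (g '' uIcc s u) ≤ M * dist (g s) (g u) :=
    hBT g ⟨hgc, hinj, himg⟩
  have guIccbdd : ∀ s ∈ Icc (0:ℝ) 1, ∀ u ∈ Icc (0:ℝ) 1,
      g '' uIcc s u ⊆ γ := by
    intro s hs u hu
    exact subset_trans (image_mono (uIcc_subset_Icc hs hu)) himg.subset
  -- chain facts
  have chainA_succ : ∀ (a : ℝ) (k : ℕ), chainA m T a (k+1) =
      chainA m T a k ++ [if compS T (chainA m T a k) 0 = a then 0 else m - 1] :=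
    fun a k => rfl
  have chain_inv : ∀ a : ℝ, (a = 0 ∨ a = 1) → ∀ k,
      (∀ j ∈ chainA m T a k, j < m) ∧ a ∈ compS T (chainA m T a k) '' Icc 0 1 := by
    intro a ha k
    induction k with
    | zero =>
      constructor
      · intro j hj; simp [chainA] at hj
      · show a ∈ compS T [] '' Icc 0 1
        rcases ha with rfl | rfl
        · exact ⟨0, hmem01, rfl⟩
        · exact ⟨1, hmem11, rfl⟩
    | succ k ih =>
      obtain ⟨hwlt, hain⟩ := ih
      set w := chainA m T a k with hw_def
      set j := if compS T w 0 = a then 0 else m - 1 with hj_def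
      have hjm : j < m := by
        rw [hj_def]
        by_cases hc : compS T w 0 = a
        · simpa [hc] using hm
        · simp only [hc, if_false]; omega
      have hwlt' : ∀ j' ∈ w ++ [j], j' < m := by
        intro j' hj'
        rcases List.mem_append.mp hj' with h' | h'
        · exact hwlt j' h'
        · rw [List.mem_singleton.mp h']; exact hjm
      have hnew : chainA m T a (k+1) = w ++ [j] := chainA_succ a k
      refine ⟨by rw [hnew]; exact hwlt', ?_⟩
      rw [hnew, compS_append]
      have hsingle : compS T [j] '' Icc 0 1 = T j '' Icc 0 1 := rfl
      rw [image_comp, hsingle, TImage j hjm]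
      by_cases hc : compS T w 0 = a
      · have hj0 : j = 0 := by rw [hj_def, if_pos hc]
        refine ⟨t 0, ?_, ?_⟩
        · rw [hj0]; exact ⟨le_rfl, (htmono 0 hm).le⟩
        · rw [ht0]; exact hc
      · have hjm1 : j = m - 1 := by rw [hj_def, if_neg hc]
        have himgw : compS T w '' Icc 0 1 = uIcc (compS T w 0) (compS T w 1) :=
          sim_image_Icc (rTwpos w hwlt) (Twsim w hwlt) (by norm_num)
        have h0m : compS T w 0 ∈ Icc (0:ℝ) 1 := TwMaps w hwlt 0 hmem01
        have h1m : compS T w 1 ∈ Icc (0:ℝ) 1 := TwMaps w hwlt 1 hmem11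
        have hain' := hain
        rw [himgw, mem_uIcc] at hain'
        have h1a : compS T w 1 = a := by
          rcases ha with rfl | rfl
          · rcases hain' with ⟨h1, h2⟩ | ⟨h1, h2⟩
            · exact absurd (le_antisymm h1 h0m.1) hc
            · exact le_antisymm h1 h1m.1
          · rcases hain' with ⟨h1, h2⟩ | ⟨h1, h2⟩
            · exact le_antisymm h1m.2 h2
            · exact absurd (le_antisymm h0m.2 h2) hc
        refine ⟨t m, ?_, ?_⟩
        · constructor
          · rw [hjm1]
            exact ht_le m le_rfl (m-1) (Nat.sub_le m 1)
          · rw [hjm1, Nat.sub_add_cancel hm1]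
        · rw [htm]; exact h1a
  have chain_desc : ∀ a : ℝ, (a = 0 ∨ a = 1) → ∀ k,
      (a = 0 → compS T (chainA m T a k) '' Icc 0 1 = Icc 0 (ratioProd rT (chainA m T a k))) ∧
      (a = 1 → compS T (chainA m T a k) '' Icc 0 1
        = Icc (1 - ratioProd rT (chainA m T a k)) 1) := by
    intro a ha k
    obtain ⟨hwlt, hain⟩ := chain_inv a ha k
    set w := chainA m T a k
    set L := ratioProd rT w with hLdef
    have himgw : compS T w '' Icc 0 1 = uIcc (compS T w 0) (compS T w 1) :=
      sim_image_Icc (rTwpos w hwlt) (Twsim w hwlt) (by norm_num)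
    have h0m : compS T w 0 ∈ Icc (0:ℝ) 1 := TwMaps w hwlt 0 hmem01
    have h1m : compS T w 1 ∈ Icc (0:ℝ) 1 := TwMaps w hwlt 1 hmem11
    have hdist : |compS T w 1 - compS T w 0| = L := by
      have h := Twsim w hwlt 1 0
      rw [Real.dist_eq, Real.dist_eq] at h
      norm_num at h
      exact h
    rw [himgw] at hain ⊢
    rw [mem_uIcc] at hain
    rcases le_total (compS T w 0) (compS T w 1) with hle | hle
    · rw [uIcc_of_le hle]
      rw [abs_of_nonneg (by linarith)] at hdist
      constructor
      · rintro rfl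
        have he0 : compS T w 0 = 0 := by
          rcases hain with ⟨h1, h2⟩ | ⟨h1, h2⟩ <;> linarith [h0m.1, h1m.1]
        rw [he0, show compS T w 1 = L by linarith]
      · rintro rfl
        have he1 : compS T w 1 = 1 := by
          rcases hain with ⟨h1, h2⟩ | ⟨h1, h2⟩ <;> linarith [h0m.2, h1m.2]
        rw [he1, show compS T w 0 = 1 - L by linarith]
    · rw [uIcc_of_ge hle]
      rw [abs_of_nonpos (by linarith)] at hdist
      constructor
      · rintro rfl
        have he1 : compS T w 1 = 0 := by
          rcases hain with ⟨h1, h2⟩ | ⟨h1, h2⟩ <;> linarith [h0m.1, h1m.1]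
        rw [he1, show compS T w 0 = L by linarith]
      · rintro rfl
        have he0 : compS T w 0 = 1 := by
          rcases hain with ⟨h1, h2⟩ | ⟨h1, h2⟩ <;> linarith [h0m.2, h1m.2]
        rw [he0, show compS T w 1 = 1 - L by linarith]
  set C2 := D' * (M / (pmin * D)) ^ α with hC2def
  have hC20 : 0 ≤ C2 := mul_nonneg hD' (Real.rpow_nonneg (by positivity) α)
  have W : ∀ a : ℝ, (a = 0 ∨ a = 1) → ∀ u ∈ Icc (0:ℝ) 1,
      dist (f (g a)) (f (g u)) ≤ C2 * dist (g a) (g u) ^ α := by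
    intro a ha u hu
    have hamem : a ∈ Icc (0:ℝ) 1 := by
      rcases ha with rfl | rfl
      exacts [hmem01, hmem11]
    by_cases hau : u = a
    · rw [hau, dist_self]
      exact mul_nonneg hC20 (Real.rpow_nonneg dist_nonneg α)
    have hd0 : 0 < dist u a := dist_pos.mpr hau
    have hd0le : dist u a ≤ 1 := by
      rw [Real.dist_eq]
      rcases ha with rfl | rfl
      · rw [abs_of_nonneg (by linarith [hu.1])]; linarith [hu.2]
      · rw [abs_of_nonpos (by linarith [hu.2])]; linarith [hu.1]
    obtain ⟨n0, hn0⟩ := exists_pow_lt_of_lt_one hd0 hrmax1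
    have hex : ∃ k, ratioProd rT (chainA m T a k) < dist u a := by
      refine ⟨n0, lt_of_le_of_lt ?_ hn0⟩
      have := rTwle (chainA m T a n0) (chain_inv a ha n0).1
      rwa [chainA_length] at this
    have hN := Nat.find_spec hex
    have hN0 : Nat.find hex ≠ 0 := by
      intro h0
      rw [h0] at hN
      have : ratioProd rT (chainA m T a 0) = 1 := by simp [chainA]
      rw [this] at hN
      linarith
    obtain ⟨k, hk⟩ : ∃ k, Nat.find hex = k + 1 :=
      ⟨Nat.find hex - 1, (Nat.succ_pred_eq_of_ne_zero hN0).symm⟩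
    have hkub : dist u a ≤ ratioProd rT (chainA m T a k) := by
      have := Nat.find_min hex (by omega : k < Nat.find hex)
      linarith [not_lt.mp this]
    have hk1 : ratioProd rT (chainA m T a (k+1)) < dist u a := by rw [← hk]; exact hN
    set w := chainA m T a k with hwdef
    have hwlt := (chain_inv a ha k).1
    have hwlt1 := (chain_inv a ha (k+1)).1
    -- (i) uIcc a u ⊆ J_k
    have hsub1 : uIcc a u ⊆ compS T w '' Icc 0 1 := by
      rcases ha with rfl | rfl
      · rw [(chain_desc 0 (Or.inl rfl) k).1 rfl, uIcc_of_le hu.1]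
        apply Icc_subset_Icc le_rfl
        rw [Real.dist_eq, abs_of_nonneg (by linarith [hu.1])] at hkub
        linarith
      · rw [(chain_desc 1 (Or.inr rfl) k).2 rfl, uIcc_of_ge hu.2]
        apply Icc_subset_Icc _ le_rfl
        rw [Real.dist_eq, abs_of_nonpos (by linarith [hu.2])] at hkub
        linarith
    -- (ii) J_{k+1} ⊆ uIcc a u
    have hsub2 : compS T (chainA m T a (k+1)) '' Icc 0 1 ⊆ uIcc a u := by
      rcases ha with rfl | rfl
      · rw [(chain_desc 0 (Or.inl rfl) (k+1)).1 rfl, uIcc_of_le hu.1]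
        apply Icc_subset_Icc le_rfl
        rw [Real.dist_eq, abs_of_nonneg (by linarith [hu.1])] at hk1
        linarith
      · rw [(chain_desc 1 (Or.inr rfl) (k+1)).2 rfl, uIcc_of_ge hu.2]
        apply Icc_subset_Icc _ le_rfl
        rw [Real.dist_eq, abs_of_nonpos (by linarith [hu.2])] at hk1
        linarith
    -- upper bound on f side
    have hga : g a ∈ compS S w '' γ := by
      rw [← gIm w hwlt]; exact mem_image_of_mem g (hsub1 left_mem_uIcc)
    have hgu : g u ∈ compS S w '' γ := by
      rw [← gIm w hwlt]; exact mem_image_of_mem g (hsub1 right_mem_uIcc)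
    have hfup : dist (f (g a)) (f (g u)) ≤ ratioProd q w * D' := by
      have h1 : f (g a) ∈ compS S' w '' γ' := by
        rw [← fSw w hwlt]; exact mem_image_of_mem f hga
      have h2 : f (g u) ∈ compS S' w '' γ' := by
        rw [← fSw w hwlt]; exact mem_image_of_mem f hgu
      calc dist (f (g a)) (f (g u)) ≤ diam (compS S' w '' γ') :=
            dist_le_diam_of_mem (S'wbdd w hwlt) h1 h2
        _ = ratioProd q w * D' := diamS'w w hwlt
    -- lower bound on g side
    have hlow : ratioProd p (chainA m T a (k+1)) * D ≤ M * dist (g a) (g u) := by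
      have hsubg : compS S (chainA m T a (k+1)) '' γ ⊆ g '' uIcc a u := by
        rw [← gIm _ hwlt1]; exact image_mono hsub2
      calc ratioProd p (chainA m T a (k+1)) * D
          = diam (compS S (chainA m T a (k+1)) '' γ) := (diamSw _ hwlt1).symm
        _ ≤ diam (g '' uIcc a u) := diam_mono hsubg (hγb.subset (guIccbdd a hamem u hu))
        _ ≤ M * dist (g a) (g u) := hBTg a hamem u hu
    set j := if compS T w 0 = a then 0 else m - 1 with hj_def
    have hjm : j < m := by
      rw [hj_def]
      by_cases hc : compS T w 0 = a
      · simpa [hc] using hm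
      · simp only [hc, if_false]; omega
    have hprodsplit : ratioProd p (chainA m T a (k+1)) = ratioProd p w * p j := by
      rw [chainA_succ a k, ← hwdef, ← hj_def, ratioProd_append, ratioProd_cons,
        ratioProd_nil, mul_one]
    have hpww : ratioProd p w ≤ M * dist (g a) (g u) / (pmin * D) := by
      rw [le_div_iff₀ (by positivity)]
      calc ratioProd p w * (pmin * D) ≤ ratioProd p w * (p j * D) :=
            mul_le_mul_of_nonneg_left
              (mul_le_mul_of_nonneg_right (hpminle j hjm) hD.le) (pwpos w hwlt).le
        _ = ratioProd p (chainA m T a (k+1)) * D := by rw [hprodsplit]; ring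
        _ ≤ M * dist (g a) (g u) := hlow
    calc dist (f (g a)) (f (g u)) ≤ ratioProd q w * D' := hfup
      _ ≤ ratioProd p w ^ α * D' := mul_le_mul_of_nonneg_right (qwle w hwlt) hD'
      _ ≤ (M * dist (g a) (g u) / (pmin * D)) ^ α * D' :=
          mul_le_mul_of_nonneg_right
            (Real.rpow_le_rpow (pwpos w hwlt).le hpww hα0.le) hD'
      _ = C2 * dist (g a) (g u) ^ α := by
          rw [hC2def, show M * dist (g a) (g u) / (pmin * D)
              = (M / (pmin * D)) * dist (g a) (g u) by ring]
          rw [Real.mul_rpow (by positivity) dist_nonneg]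
          ring
  -- anchor vertices
  have hanchL : ∀ i, i < m → ∃ ar : ℝ, (ar = 0 ∨ ar = 1) ∧ T i ar = t i := by
    intro i hi
    rcases Nat.le_one_iff_eq_zero_or_eq_one.mp (hε i hi) with he | he
    · refine ⟨0, Or.inl rfl, ?_⟩
      have h := (hverT i hi).1
      rw [ht0] at h
      rw [h, he]
      norm_num
    · refine ⟨1, Or.inr rfl, ?_⟩
      have h := (hverT i hi).2
      rw [htm] at h
      rw [h, he]
      norm_num
  have hanchR : ∀ i, i < m → ∃ ar : ℝ, (ar = 0 ∨ ar = 1) ∧ T i ar = t (i+1) := by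
    intro i hi
    rcases Nat.le_one_iff_eq_zero_or_eq_one.mp (hε i hi) with he | he
    · refine ⟨1, Or.inr rfl, ?_⟩
      have h := (hverT i hi).2
      rw [htm] at h
      rw [h, he]
      norm_num
    · refine ⟨0, Or.inl rfl, ?_⟩
      have h := (hverT i hi).1
      rw [ht0] at h
      rw [h, he]
  set C3 := (m : ℝ) * C2 * M ^ α with hC3def
  have hC30 : 0 ≤ C3 :=
    mul_nonneg (mul_nonneg (Nat.cast_nonneg m) hC20) (Real.rpow_nonneg hM.le α)
  have MAIN : ∀ k, ∀ s ∈ Icc (0:ℝ) 1, ∀ u ∈ Icc (0:ℝ) 1, s < u → rmax ^ k < u - s →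
      dist (f (g s)) (f (g u)) ≤ C3 * dist (g s) (g u) ^ α := by
    intro k
    induction k with
    | zero =>
      intro s hs u hu hsu habs
      exfalso
      rw [pow_zero] at habs
      linarith [hs.1, hu.2]
    | succ k ih =>
      have ih' : ∀ x ∈ Icc (0:ℝ) 1, ∀ y ∈ Icc (0:ℝ) 1, rmax ^ k < dist x y →
          dist (f (g x)) (f (g y)) ≤ C3 * dist (g x) (g y) ^ α := by
        intro x hx y hy hd
        rcases lt_trichotomy x y with h | h | h
        · refine ih x hx y hy h ?_
          rw [Real.dist_eq, abs_of_nonpos (by linarith)] at hd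
          linarith
        · exfalso
          rw [h, dist_self] at hd
          exact absurd hd (not_lt.mpr (pow_pos hrmax0 k).le)
        · rw [dist_comm (f (g x)), dist_comm (g x)]
          refine ih y hy x hx h ?_
          rw [Real.dist_eq, abs_of_nonneg (by linarith)] at hd
          linarith
      intro s hs u hu hsu habs
      by_cases hA : ∃ i, i < m ∧ t i ≤ s ∧ u ≤ t (i+1)
      · obtain ⟨i, hi, hts, htu⟩ := hA
        have hsmem : s ∈ T i '' Icc 0 1 := by
          rw [TImage i hi]; exact ⟨hts, le_trans hsu.le htu⟩
        have humem : u ∈ T i '' Icc 0 1 := by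
          rw [TImage i hi]; exact ⟨le_trans hts hsu.le, htu⟩
        obtain ⟨s', hs', hTs'⟩ := hsmem
        obtain ⟨u', hu', hTu'⟩ := humem
        have hd' : rT i * dist s' u' = u - s := by
          have h := (hsimT i hi).2.2 s' u'
          rw [hTs', hTu'] at h
          rw [← h, Real.dist_eq, abs_of_nonpos (by linarith)]
          ring
        have hdk : rmax ^ k < dist s' u' := by
          rw [pow_succ] at habs
          have h1 : rmax ^ k * rmax < rmax * dist s' u' := by
            calc rmax ^ k * rmax < u - s := habs
              _ = rT i * dist s' u' := hd'.symm
              _ ≤ rmax * dist s' u' := mul_le_mul_of_nonneg_right (hrmaxle i hi) dist_nonneg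
          rw [mul_comm (rmax ^ k) rmax] at h1
          exact lt_of_mul_lt_mul_left h1 hrmax0.le
        have hbound := ih' s' hs' u' hu' hdk
        have htr := transfer i hi C3 hC30 s' hs' u' hu' hbound
        rwa [hTs', hTu'] at htr
      · set c : ℕ → ℝ := fun i => max s (min (t i) u) with hcdef
        have hcval : ∀ i, c i = max s (min (t i) u) := fun i => rfl
        have hc0 : c 0 = s := by
          rw [hcval, ht0, min_eq_left hu.1, max_eq_left hs.1]
        have hcm : c m = u := by
          rw [hcval, htm, min_eq_right hu.2, max_eq_right hsu.le]
        have hcs : ∀ i, s ≤ c i := fun i => le_max_left _ _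
        have hcu : ∀ i, c i ≤ u := fun i => max_le hsu.le (min_le_right _ _)
        have hcmono : ∀ i, i < m → c i ≤ c (i+1) := by
          intro i hi
          rw [hcval, hcval]
          exact max_le_max le_rfl (min_le_min (htmono i hi).le le_rfl)
        have key : ∀ i, i < m → dist (f (g (c i))) (f (g (c (i+1)))) ≤
            C2 * (M * dist (g s) (g u)) ^ α := by
          intro i hi
          by_cases hcc : c i = c (i+1)
          · rw [hcc, dist_self]
            exact mul_nonneg hC20
              (Real.rpow_nonneg (mul_nonneg hM.le dist_nonneg) α)
          have hlt : c i < c (i+1) := lt_of_le_of_ne (hcmono i hi) hcc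
          have hciu : c i < u := lt_of_lt_of_le hlt (hcu (i+1))
          have hcis : s < c (i+1) := lt_of_le_of_lt (hcs i) hlt
          have htiu : t i < u := by
            by_contra hcon
            push_neg at hcon
            have hciu' : c i = u := by
              rw [hcval, min_eq_right hcon, max_eq_right hsu.le]
            exact absurd hciu' (ne_of_lt hciu)
          have hminci : c i = max s (t i) := by
            rw [hcval, min_eq_left htiu.le]
          have hcit : t i ≤ c i := hminci ▸ le_max_right _ _
          have hmin1 : c (i+1) = min (t (i+1)) u := by
            rcases max_choice s (min (t (i+1)) u) with hcase | hcase
            · exfalso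
              rw [hcval] at hcis
              rw [hcase] at hcis
              exact absurd rfl (ne_of_lt hcis)
            · rw [hcval]; exact hcase
          have hci1le : c (i+1) ≤ t (i+1) := hmin1 ▸ min_le_left _ _
          have hciopts : c i = s ∨ c i = t i := by rw [hminci]; exact max_choice s (t i)
          have hci1opts : c (i+1) = t (i+1) ∨ c (i+1) = u := by
            rw [hmin1]; exact min_choice (t (i+1)) u
          have hanchored : c i = t i ∨ c (i+1) = t (i+1) := by
            rcases hciopts with h1 | h1
            · rcases hci1opts with h2 | h2
              · exact Or.inr h2
              · exact absurd ⟨i, hi, by rw [← h1]; exact hcit,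
                  by rw [← h2]; exact hci1le⟩ hA
            · exact Or.inl h1
          have hciIcc : c i ∈ Icc (t i) (t (i+1)) := ⟨hcit, le_trans hlt.le hci1le⟩
          have hci1Icc : c (i+1) ∈ Icc (t i) (t (i+1)) := ⟨le_trans hcit hlt.le, hci1le⟩
          have hgdist : dist (g (c i)) (g (c (i+1))) ≤ M * dist (g s) (g u) := by
            have hmemc : ∀ j : ℕ, g (c j) ∈ g '' uIcc s u := fun j =>
              mem_image_of_mem g (by rw [uIcc_of_le hsu.le]; exact ⟨hcs j, hcu j⟩)
            calc dist (g (c i)) (g (c (i+1))) ≤ diam (g '' uIcc s u) :=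
                  dist_le_diam_of_mem (hγb.subset (guIccbdd s hs u hu)) (hmemc i) (hmemc (i+1))
              _ ≤ M * dist (g s) (g u) := hBTg s hs u hu
          have hkey : dist (f (g (c i))) (f (g (c (i+1)))) ≤
              C2 * dist (g (c i)) (g (c (i+1))) ^ α := by
            rcases hanchored with hL | hR
            · obtain ⟨ar, har, hTar⟩ := hanchL i hi
              have hbmem : c (i+1) ∈ T i '' Icc 0 1 := by rw [TImage i hi]; exact hci1Icc
              obtain ⟨b', hb', hTb'⟩ := hbmem
              have harmem : ar ∈ Icc (0:ℝ) 1 := by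
                rcases har with rfl | rfl
                exacts [hmem01, hmem11]
              have hWb := W ar har b' hb'
              have htr := transfer i hi C2 hC20 ar harmem b' hb' hWb
              rwa [hTar, hTb', ← hL] at htr
            · obtain ⟨ar, har, hTar⟩ := hanchR i hi
              have hbmem : c i ∈ T i '' Icc 0 1 := by rw [TImage i hi]; exact hciIcc
              obtain ⟨b', hb', hTb'⟩ := hbmem
              have harmem : ar ∈ Icc (0:ℝ) 1 := by
                rcases har with rfl | rfl
                exacts [hmem01, hmem11]
              have hWb := W ar har b' hb'
              rw [dist_comm (f (g ar)), dist_comm (g ar)] at hWb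
              have htr := transfer i hi C2 hC20 b' hb' ar harmem hWb
              rwa [hTar, hTb', ← hR] at htr
          calc dist (f (g (c i))) (f (g (c (i+1))))
              ≤ C2 * dist (g (c i)) (g (c (i+1))) ^ α := hkey
            _ ≤ C2 * (M * dist (g s) (g u)) ^ α :=
              mul_le_mul_of_nonneg_left
                (Real.rpow_le_rpow dist_nonneg hgdist hα0.le) hC20
        have hchain : dist (f (g s)) (f (g u)) ≤
            ∑ i ∈ Finset.range m, dist (f (g (c i))) (f (g (c (i+1)))) := by
          have h := dist_le_range_sum_dist (fun i => f (g (c i))) m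
          rwa [hc0, hcm] at h
        calc dist (f (g s)) (f (g u))
            ≤ ∑ i ∈ Finset.range m, dist (f (g (c i))) (f (g (c (i+1)))) := hchain
          _ ≤ ∑ _i ∈ Finset.range m, C2 * (M * dist (g s) (g u)) ^ α :=
            Finset.sum_le_sum (fun i hi => key i (Finset.mem_range.mp hi))
          _ = m * (C2 * (M * dist (g s) (g u)) ^ α) := by
            rw [Finset.sum_const, Finset.card_range, nsmul_eq_mul]
          _ = C3 * dist (g s) (g u) ^ α := by
            rw [hC3def, Real.mul_rpow hM.le dist_nonneg]; ring
  -- final assembly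
  have final : ∀ s ∈ Icc (0:ℝ) 1, ∀ u ∈ Icc (0:ℝ) 1,
      dist (f (g s)) (f (g u)) ≤ (C3 + 1) * dist (g s) (g u) ^ α := by
    intro s hs u hu
    have hnn : 0 ≤ dist (g s) (g u) ^ α := Real.rpow_nonneg dist_nonneg α
    rcases lt_trichotomy s u with h | h | h
    · obtain ⟨k, hk⟩ := exists_pow_lt_of_lt_one (sub_pos.mpr h) hrmax1
      have hMain := MAIN k s hs u hu h hk
      exact le_trans hMain (mul_le_mul_of_nonneg_right (by linarith) hnn)
    · rw [h, dist_self]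
      exact mul_nonneg (by linarith) (Real.rpow_nonneg dist_nonneg α)
    · obtain ⟨k, hk⟩ := exists_pow_lt_of_lt_one (sub_pos.mpr h) hrmax1
      have hMain := MAIN k u hu s hs h hk
      rw [dist_comm (f (g u)), dist_comm (g u)] at hMain
      exact le_trans hMain (mul_le_mul_of_nonneg_right (by linarith) hnn)
  refine ⟨C3 + 1, by linarith, ?_⟩
  intro x hx y hy
  rw [← himg] at hx hy
  obtain ⟨s, hs, rfl⟩ := hx
  obtain ⟨u, hu, rfl⟩ := hy
  exact final s hs u hu
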